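/- Let A be a real n×n matrix, let F be a real n×m₁ matrix with orthonormal columns and F̃ a real n×m₂ matrix with orthonormal columns such that the column space of F is contained in the column space of F̃, and let r be a positive integer with r ≤ m₁. Then for every real m₁×n matrix T with rank(T) ≤ r there exists a real m₂×n matrix T̃ with rank(T̃) ≤ r such that ‖A − F̃T̃‖_F ≤ ‖A − FT‖_F; consequently the infimum of ‖A − F̃T̃‖_F² over rank-≤r matrices T̃ is at most the infimum of ‖A − FT‖_F² over rank-≤r matrices T. -/
import Mathlib


open Matrix

/-- Frobenius norm of a real matrix: ‖A‖_F = sqrt(trace(Aᵀ A)). -/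
noncomputable def frobNorm {α β : Type*} [Fintype α] [Fintype β] (A : Matrix α β ℝ) : ℝ :=
  Real.sqrt (Matrix.trace (Aᵀ * A))

theorem stmt_8 {n m₁ m₂ r : ℕ} (hr : 0 < r) (hrm : r ≤ m₁)
    (A : Matrix (Fin n) (Fin n) ℝ)
    (F : Matrix (Fin n) (Fin m₁) ℝ) (Ft : Matrix (Fin n) (Fin m₂) ℝ)
    (hF : Fᵀ * F = 1) (hFt : Ftᵀ * Ft = 1)
    -- column space of F is contained in the column space of F̃
    (hrange : LinearMap.range F.mulVecLin ≤ LinearMap.range Ft.mulVecLin) :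
    (∀ T : Matrix (Fin m₁) (Fin n) ℝ, T.rank ≤ r →
      ∃ Tt : Matrix (Fin m₂) (Fin n) ℝ, Tt.rank ≤ r ∧
        frobNorm (A - Ft * Tt) ≤ frobNorm (A - F * T)) ∧
    sInf {x : ℝ | ∃ Tt : Matrix (Fin m₂) (Fin n) ℝ, Tt.rank ≤ r ∧
        x = frobNorm (A - Ft * Tt) ^ 2} ≤
      sInf {x : ℝ | ∃ T : Matrix (Fin m₁) (Fin n) ℝ, T.rank ≤ r ∧
        x = frobNorm (A - F * T) ^ 2} := by
  -- Key projection fact: Ft * (Ftᵀ * F) = F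
  have hproj : Ft * (Ftᵀ * F) = F := by
    have hmv : ∀ v : Fin m₁ → ℝ, (Ft * (Ftᵀ * F)).mulVec v = F.mulVec v := by
      intro v
      obtain ⟨w, hw⟩ := hrange ⟨v, rfl⟩
      simp only [Matrix.mulVecLin_apply] at hw
      calc (Ft * (Ftᵀ * F)).mulVec v = Ft.mulVec (Ftᵀ.mulVec (F.mulVec v)) := by
            rw [Matrix.mulVec_mulVec, Matrix.mulVec_mulVec, Matrix.mul_assoc]
        _ = Ft.mulVec (Ftᵀ.mulVec (Ft.mulVec w)) := by rw [hw]
        _ = (Ft * (Ftᵀ * Ft)).mulVec w := by rw [Matrix.mulVec_mulVec, Matrix.mulVec_mulVec,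
              Matrix.mul_assoc]
        _ = Ft.mulVec w := by rw [hFt, Matrix.mul_one]
        _ = F.mulVec v := hw
    ext i j
    have := congrFun (hmv (Pi.single j 1)) i
    simpa [Matrix.mulVec_single] using this
  have key : ∀ T : Matrix (Fin m₁) (Fin n) ℝ, T.rank ≤ r →
      ∃ Tt : Matrix (Fin m₂) (Fin n) ℝ, Tt.rank ≤ r ∧
        frobNorm (A - Ft * Tt) = frobNorm (A - F * T) := by
    intro T hT
    refine ⟨Ftᵀ * F * T, ?_, ?_⟩
    · exact le_trans (Matrix.rank_mul_le_right _ _) hT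
    · rw [← Matrix.mul_assoc Ft (Ftᵀ * F) T, hproj]
  constructor
  · intro T hT
    obtain ⟨Tt, h1, h2⟩ := key T hT
    exact ⟨Tt, h1, le_of_eq h2⟩
  · set S₂ := {x : ℝ | ∃ Tt : Matrix (Fin m₂) (Fin n) ℝ, Tt.rank ≤ r ∧
        x = frobNorm (A - Ft * Tt) ^ 2}
    set S₁ := {x : ℝ | ∃ T : Matrix (Fin m₁) (Fin n) ℝ, T.rank ≤ r ∧
        x = frobNorm (A - F * T) ^ 2}
    have hS₁ : S₁.Nonempty := by
      refine ⟨frobNorm (A - F * 0) ^ 2, 0, ?_, rfl⟩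
      simp [hr.le]
    have hbdd : BddBelow S₂ := by
      refine ⟨0, fun x hx => ?_⟩
      obtain ⟨Tt, _, rfl⟩ := hx
      positivity
    refine le_csInf hS₁ ?_
    rintro x ⟨T, hT, rfl⟩
    obtain ⟨Tt, h1, h2⟩ := key T hT
    exact le_trans (csInf_le hbdd ⟨Tt, h1, rfl⟩) (by rw [h2])
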